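/- In a Coxeter group W with Bruhat order and length function ℓ, for every pair of elements u, v there is a unique element w = u*v (the Demazure product) such that the set product {u' v' : u' ≤ u, v' ≤ v} equals {x : x ≤ w}. Moreover u*v = u v' for some v' ≤ v with ℓ(uv') = ℓ(u) + ℓ(v'); in particular ℓ(u*v) ≤ ℓ(u) + ℓ(v), with u*v = uv if and only if ℓ(uv) = ℓ(u) + ℓ(v). -/

import Mathlib

variable {B W : Type*} [Group W] {M : CoxeterMatrix B}

/-- Bruhat order on a Coxeter group, via the subword property: `x ≤ w` iff some reduced word
for `w` has a subword whose product is `x`. -/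
def CoxeterSystem.BruhatLE (cs : CoxeterSystem M W) (x w : W) : Prop :=
  ∃ ω : List B, cs.IsReduced ω ∧ cs.wordProd ω = w ∧
    ∃ ω' : List B, ω'.Sublist ω ∧ cs.wordProd ω' = x

/-- `d` is the Demazure product of `u` and `v`: the set of products `u'v'` with `u' ≤ u`,
`v' ≤ v` equals the Bruhat interval `{x | x ≤ d}`. -/
def CoxeterSystem.IsDemazureProd (cs : CoxeterSystem M W) (u v d : W) : Prop :=
  {x : W | ∃ a b : W, cs.BruhatLE a u ∧ cs.BruhatLE b v ∧ x = a * b} =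
    {x : W | cs.BruhatLE x d}

namespace DemazureAux
open CoxeterSystem List
open scoped Classical

variable (cs : CoxeterSystem M W)

local prefix:100 "s" => cs.simple
local prefix:100 "π" => cs.wordProd
local prefix:100 "ℓ" => cs.length
local prefix:100 "ris" => cs.rightInvSeq

/-- The basic involution of the parity representation. -/
noncomputable def nfun (i : B) : W × ZMod 2 → W × ZMod 2 :=
  fun p => (s i * p.1 * s i, p.2 + if p.1 = s i then 1 else 0)

lemma simple_conj_eq_iff (i : B) (x : W) : (s i * x * s i = s i) ↔ (x = s i) := by
  rw [mul_assoc, mul_eq_left, mul_eq_one_iff_eq_inv, cs.inv_simple]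

lemma nfun_involutive (i : B) : Function.Involutive (nfun cs i) := by
  intro p
  simp only [nfun]
  have h1 : s i * (s i * p.1 * s i) * s i = p.1 := by
    simp only [← mul_assoc, cs.simple_mul_simple_self i, one_mul]
    rw [mul_assoc, cs.simple_mul_simple_self i, mul_one]
  rw [Prod.ext_iff]
  refine ⟨h1, ?_⟩
  simp only [simple_conj_eq_iff]
  rcases em (p.1 = s i) with h | h <;>
    simp [h, add_assoc, CharTwo.add_self_eq_zero (1 : ZMod 2)]

noncomputable def nperm (i : B) : Equiv.Perm (W × ZMod 2) :=
  (nfun_involutive cs i).toPerm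

@[simp] lemma nperm_apply (i : B) (p : W × ZMod 2) :
    nperm cs i p = (s i * p.1 * s i, p.2 + if p.1 = s i then 1 else 0) := rfl

/-- alternating elements (x*y)^n * x -/
def galt (x y : W) (n : ℕ) : W := (x * y) ^ n * x

lemma pow_mul_comm_xy (x y : W) (k : ℕ) : (x * y) ^ k * x = x * (y * x) ^ k := by
  induction k with
  | zero => simp
  | succ k ih => rw [pow_succ', mul_assoc, ih, pow_succ', ← mul_assoc, ← mul_assoc, ← mul_assoc]

lemma galt_even (x y : W) (k : ℕ) :
    (x * y) ^ k * x * (y * x) ^ k = galt x y (2 * k) := by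
  rw [galt, two_mul, pow_add]
  conv_rhs => rw [mul_assoc, pow_mul_comm_xy]
  rw [mul_assoc]

lemma galt_odd (x y : W) (k : ℕ) :
    (x * y) ^ k * (x * y * x) * (y * x) ^ k = galt x y (2 * k + 1) := by
  rw [galt, show 2 * k + 1 = k + (k + 1) from by ring, pow_add]
  conv_rhs => rw [mul_assoc, pow_mul_comm_xy x y (k + 1), pow_succ' (y * x) k]
  simp only [mul_assoc]

lemma simple_pow_inv (i i' : B) (m : ℕ) : ((s i * s i') ^ m)⁻¹ = (s i' * s i) ^ m := by
  rw [← inv_pow, mul_inv_rev, cs.inv_simple, cs.inv_simple]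





lemma conj_eq_iff' (c d a b : W) (hd : d = c⁻¹) : (c * a * d = b) ↔ (a = d * b * c) := by
  subst hd
  constructor
  · intro h; rw [← h]; group
  · intro h; rw [h]; group

/-- the key computation for the braid relation -/
lemma nperm_sq_pow (i i' : B) (m : ℕ) (p : W × ZMod 2) :
    ((nperm cs i * nperm cs i') ^ m) p =
      ((s i * s i') ^ m * p.1 * (s i' * s i) ^ m,
        p.2 + ∑ n ∈ Finset.range (2 * m),
          if p.1 = galt (s i') (s i) n then 1 else 0) := by
  set x := s i' with hx
  set y := s i with hy
  have hxinv : x⁻¹ = x := cs.inv_simple i'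
  have hinv : ∀ k : ℕ, ((y * x) ^ k)⁻¹ = (x * y) ^ k := fun k => simple_pow_inv cs i i' k
  induction m with
  | zero => simp
  | succ m ih =>
    rw [pow_succ', Equiv.Perm.mul_apply, ih, Equiv.Perm.mul_apply, nperm_apply, nperm_apply]
    have e0 : ((y * x) ^ m * p.1 * (x * y) ^ m = x) ↔ (p.1 = galt x y (2 * m)) := by
      rw [conj_eq_iff' ((y*x)^m) ((x*y)^m) p.1 x (hinv m).symm, galt_even]
    have e1 : (x * ((y * x) ^ m * p.1 * (x * y) ^ m) * x = y) ↔
        (p.1 = galt x y (2 * m + 1)) := by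
      have r1 : x * ((y*x)^m * p.1 * (x*y)^m) * x = (x*(y*x)^m) * p.1 * ((x*y)^m * x) := by
        simp only [mul_assoc]
      have hd' : (x*y)^m * x = (x * (y*x)^m)⁻¹ := by rw [mul_inv_rev, hinv m, hxinv]
      rw [r1, conj_eq_iff' (x*(y*x)^m) ((x*y)^m * x) p.1 y hd',
        show ((x*y)^m * x) * y * (x*(y*x)^m) = galt x y (2*m+1) from by
          rw [← galt_odd]; simp only [mul_assoc]]
    simp only [Prod.mk.injEq]
    constructor
    · rw [pow_succ' (y*x), pow_succ (x*y)]
      simp only [mul_assoc, hx, hy]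
    · simp only [← hx, ← hy, e0, e1]
      rw [show 2 * (m + 1) = (2 * m) + 1 + 1 from by ring, Finset.sum_range_succ,
        Finset.sum_range_succ]
      ring


lemma galt_period (i i' : B) (n : ℕ) :
    galt (s i') (s i) (M i i' + n) = galt (s i') (s i) n := by
  rw [galt, galt, add_comm, pow_add, cs.simple_mul_simple_pow' i i', mul_one]

lemma nperm_liftable : M.IsLiftable (fun i => nperm cs i) := by
  intro i i'
  ext p
  · rw [nperm_sq_pow, cs.simple_mul_simple_pow i i', cs.simple_mul_simple_pow' i i']
    simp
  · rw [nperm_sq_pow]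
    simp only [Equiv.Perm.one_apply]
    rw [two_mul, Finset.sum_range_add]
    have : ∀ n, (if p.1 = galt (s i') (s i) (M i i' + n) then (1 : ZMod 2) else 0)
        = if p.1 = galt (s i') (s i) n then 1 else 0 := by
      intro n; rw [galt_period]
    simp only [this]
    rw [CharTwo.add_self_eq_zero, add_zero]

/-- The parity (reflection-counting) representation. -/
noncomputable def nrep : W →* Equiv.Perm (W × ZMod 2) :=
  cs.lift ⟨fun i => nperm cs i, nperm_liftable cs⟩

@[simp] lemma nrep_simple (i : B) : nrep cs (s i) = nperm cs i :=
  cs.lift_apply_simple (nperm_liftable cs) i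

/-- indicator count mod 2 -/
noncomputable def cnt (t : W) (l : List W) : ZMod 2 :=
  (l.map (fun r => if t = r then (1 : ZMod 2) else 0)).sum

@[simp] lemma cnt_nil (t : W) : cnt t ([] : List W) = 0 := rfl

lemma cnt_cons (t r : W) (l : List W) :
    cnt t (r :: l) = (if t = r then 1 else 0) + cnt t l := by
  simp [cnt]

lemma cnt_ne_zero_mem (t : W) (l : List W) (h : cnt t l ≠ 0) : t ∈ l := by
  induction l with
  | nil => simp [cnt] at h
  | cons r l ih =>
    rcases em (t = r) with rfl | hr
    · exact List.mem_cons_self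
    · rw [cnt_cons, if_neg hr, zero_add] at h
      exact List.mem_cons_of_mem _ (ih h)

lemma nrep_wordProd (ω : List B) (t : W) (ε : ZMod 2) :
    nrep cs (π ω) (t, ε) = (π ω * t * (π ω)⁻¹, ε + cnt t (ris ω)) := by
  induction ω generalizing ε with
  | nil => simp
  | cons i ω ih =>
    rw [cs.wordProd_cons, map_mul, Equiv.Perm.mul_apply, ih, nrep_simple, nperm_apply]
    simp only [CoxeterSystem.rightInvSeq]
    have hcond : (π ω * t * (π ω)⁻¹ = s i) ↔ (t = (π ω)⁻¹ * s i * π ω) := by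
      rw [conj_eq_iff' (π ω) ((π ω)⁻¹) t (s i) rfl]
    rw [Prod.mk.injEq]
    constructor
    · rw [mul_inv_rev, cs.inv_simple]
      simp only [mul_assoc]
    · rw [cnt_cons]
      simp only [hcond]
      ring

/-- The mod-2 count of a reflection among inversions. -/
noncomputable def nn (w t : W) : ZMod 2 := (nrep cs w (t, 0)).2

lemma nn_eq_cnt (ω : List B) (t : W) : nn cs (π ω) t = cnt t (ris ω) := by
  rw [nn, nrep_wordProd, zero_add]

lemma nrep_apply (w t : W) (ε : ZMod 2) :
    nrep cs w (t, ε) = (w * t * w⁻¹, ε + nn cs w t) := by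
  obtain ⟨ω, rfl⟩ := cs.wordProd_surjective w
  rw [nrep_wordProd, nn_eq_cnt]

lemma nn_mul (x y t : W) : nn cs (x * y) t = nn cs y t + nn cs x (y * t * y⁻¹) := by
  have : nrep cs (x * y) (t, 0) = nrep cs x (nrep cs y (t, 0)) := by
    rw [map_mul]; rfl
  rw [nn, this, nrep_apply, nrep_apply]
  simp

lemma nn_one (t : W) : nn cs 1 t = 0 := by
  have := nn_eq_cnt cs [] t
  simpa using this

lemma nn_inv (u t : W) : nn cs u⁻¹ t = nn cs u (u⁻¹ * t * u) := by
  have h := nn_mul cs u u⁻¹ t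
  rw [mul_inv_cancel, nn_one, inv_inv] at h
  have := congrArg (fun z => nn cs u⁻¹ t + z) h
  rw [add_zero, ← add_assoc, CharTwo.add_self_eq_zero, zero_add] at this
  exact this

lemma nn_simple (i : B) : nn cs (s i) (s i) = 1 := by
  have := nn_eq_cnt cs [i] (s i)
  rw [cs.wordProd_singleton] at this
  rw [this, cs.rightInvSeq_singleton, cnt_cons, if_pos rfl, cnt_nil, add_zero]

lemma nn_refl_self {t : W} (ht : cs.IsReflection t) : nn cs t t = 1 := by
  obtain ⟨u, i, rfl⟩ := ht
  have e1 : u * s i * u⁻¹ = u * (s i * u⁻¹) := by rw [mul_assoc]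
  rw [e1, nn_mul]
  have c1 : s i * u⁻¹ * (u * (s i * u⁻¹)) * (s i * u⁻¹)⁻¹ = s i := by group
  have c2 : u⁻¹ * (u * (s i * u⁻¹)) * u = s i := by group
  rw [c1, nn_mul, nn_inv, c2]
  have c3 : u⁻¹ * (u * (s i * u⁻¹)) * u⁻¹⁻¹ = s i := by group
  rw [c3, nn_simple]
  rw [add_comm (nn cs u (s i)) 1, add_assoc, CharTwo.add_self_eq_zero, add_zero]

lemma zmod2_cases (a : ZMod 2) : a = 0 ∨ a = 1 := by revert a; decide

lemma nn_one_of_lt {w t : W} (ht : cs.IsReflection t) (h : ℓ (w * t) < ℓ w) :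
    nn cs w t = 1 := by
  rcases zmod2_cases (nn cs w t) with h0 | h1
  · exfalso
    have ht3 : t * t * t⁻¹ = t := by rw [ht.mul_self, one_mul, ht.inv]
    have hwt : nn cs (w * t) t = 1 := by
      rw [nn_mul, ht3, nn_refl_self cs ht, h0, add_zero]
    obtain ⟨ω, red, hw⟩ := cs.exists_reduced_word' (w * t)
    have hcnt : cnt t (ris ω) = 1 := by rw [← nn_eq_cnt, ← hw]; exact hwt
    have hmem : t ∈ ris ω := cnt_ne_zero_mem t _ (by rw [hcnt]; exact one_ne_zero)
    have hri := cs.isRightInversion_of_mem_rightInvSeq red hmem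
    rw [← hw] at hri
    have h2 := hri.2
    rw [mul_assoc, ht.mul_self, mul_one] at h2
    omega
  · exact h1

theorem strong_exchange (ω : List B) {t : W} (ht : cs.IsReflection t)
    (h : ℓ (π ω * t) < ℓ (π ω)) :
    ∃ j < ω.length, π (ω.eraseIdx j) = π ω * t := by
  have h1 : nn cs (π ω) t = 1 := nn_one_of_lt cs ht h
  have hcnt : cnt t (ris ω) = 1 := by rw [← nn_eq_cnt]; exact h1
  have hmem : t ∈ ris ω := cnt_ne_zero_mem t _ (by rw [hcnt]; exact one_ne_zero)
  obtain ⟨j, hj, hg⟩ := List.mem_iff_getElem.mp hmem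
  have hjl : j < ω.length := by
    have := cs.length_rightInvSeq ω; omega
  refine ⟨j, hjl, ?_⟩
  have hgd : (ris ω).getD j 1 = t := by
    rw [List.getD_eq_getElem _ 1 hj, hg]
  rw [← cs.wordProd_mul_getD_rightInvSeq ω j, hgd]


/-! ### Bruhat chain order -/

/-- covering-type step for the Bruhat order -/
def clt (a b : W) : Prop := ∃ t, cs.IsReflection t ∧ b = a * t ∧ ℓ a < ℓ b

/-- Bruhat order via chains of reflections -/
def cle : W → W → Prop := Relation.ReflTransGen (clt cs)

lemma cle_refl (a : W) : cle cs a a := Relation.ReflTransGen.refl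

lemma cle_length_le {a b : W} (h : cle cs a b) : ℓ a ≤ ℓ b := by
  induction h with
  | refl => exact le_refl _
  | tail _ hbc ih => obtain ⟨t, _, _, hlt⟩ := hbc; omega

lemma cle_eq_of_length_ge {a b : W} (h : cle cs a b) (hl : ℓ b ≤ ℓ a) : a = b := by
  rcases Relation.ReflTransGen.cases_tail h with rfl | ⟨c, hac, t, _, rfl, hlt⟩
  · rfl
  · have := cle_length_le cs hac; omega

lemma sublist_concat_cases {ω' ω : List B} {i : B} (h : ω'.Sublist (ω ++ [i])) :
    ω'.Sublist ω ∨ ∃ ξ, ξ.Sublist ω ∧ ω' = ξ ++ [i] := by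
  rcases List.sublist_append_iff.mp h with ⟨x, y, rfl, hx, hy⟩
  rcases List.sublist_singleton.mp hy with rfl | rfl
  · left; simpa using hx
  · right; exact ⟨x, hx, rfl⟩

/-- Deletion property: every word has a reduced sublist with the same product. -/
lemma deletion_aux : ∀ (n : ℕ) (ω : List B), ω.length ≤ n →
    ∃ ζ : List B, ζ.Sublist ω ∧ π ζ = π ω ∧ cs.IsReduced ζ := by
  intro n
  induction n with
  | zero =>
    intro ω hω
    have : ω = [] := List.eq_nil_of_length_eq_zero (by omega)
    subst this
    exact ⟨[], List.Sublist.refl _, rfl, by simp [CoxeterSystem.IsReduced]⟩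
  | succ n ih =>
    intro ω hω
    by_cases hred : cs.IsReduced ω
    · exact ⟨ω, List.Sublist.refl _, rfl, hred⟩
    · have hωne : ω ≠ [] := by
        rintro rfl
        exact hred (by simp [CoxeterSystem.IsReduced])
      have hlenpos : 0 < ω.length := List.length_pos_iff.mpr hωne
      have hex : ∃ j, ¬ cs.IsReduced (ω.take (j+1)) := by
        refine ⟨ω.length - 1, ?_⟩
        rw [show ω.length - 1 + 1 = ω.length from by omega, List.take_length]
        exact hred
      set j := Nat.find hex with hjdef
      have hj1 : ¬ cs.IsReduced (ω.take (j+1)) := Nat.find_spec hex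
      have hjle : j ≤ ω.length - 1 := Nat.find_le (by
        rw [show ω.length - 1 + 1 = ω.length from by omega, List.take_length]
        exact hred)
      have hjlen : j < ω.length := by omega
      have hredj : cs.IsReduced (ω.take j) := by
        rcases Nat.eq_zero_or_pos j with hj0 | hjpos
        · rw [hj0, List.take_zero]; simp [CoxeterSystem.IsReduced]
        · have := Nat.find_min hex (m := j - 1) (by omega)
          rw [show j - 1 + 1 = j from by omega] at this
          exact of_not_not this
      have hsplit : ω.take (j+1) = ω.take j ++ [ω[j]] := by
        rw [List.take_succ]
        simp [List.getElem?_eq_getElem hjlen]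
      have hlenj : (ω.take j).length = j := by
        rw [List.length_take]; omega
      have hltake : ℓ (π (ω.take j)) = j := by rw [hredj, hlenj]
      have hprod1 : π (ω.take (j+1)) = π (ω.take j) * s ω[j] := by
        rw [hsplit, cs.wordProd_append, cs.wordProd_singleton]
      have hlt : ℓ (π (ω.take j) * s ω[j]) < ℓ (π (ω.take j)) := by
        rcases cs.length_mul_simple (π (ω.take j)) ω[j] with hup | hdn
        · exfalso
          apply hj1
          unfold CoxeterSystem.IsReduced
          rw [hprod1, hup, hltake, List.length_take]
          omega
        · omega
      obtain ⟨k, hk, hke⟩ := strong_exchange cs (ω.take j) (cs.isReflection_simple ω[j]) hlt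
      set ω0 := (ω.take j).eraseIdx k ++ ω.drop (j+1) with hω0
      have hprod0 : π ω0 = π ω := by
        rw [hω0, cs.wordProd_append, hke, ← hprod1, ← cs.wordProd_append,
          List.take_append_drop]
      have hsub0 : ω0.Sublist ω := by
        have h1 : ((ω.take j).eraseIdx k).Sublist (ω.take j) := List.eraseIdx_sublist _ k
        have h2 : (ω.take j).Sublist (ω.take (j+1)) := by
          rw [hsplit]; exact (List.sublist_append_left _ _)
        have h3 : ω0.Sublist (ω.take (j+1) ++ ω.drop (j+1)) :=
          List.Sublist.append (h1.trans h2) (List.Sublist.refl _)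
        rwa [List.take_append_drop] at h3
      have hlen0 : ω0.length ≤ n := by
        have h4 : k < (ω.take j).length := by omega
        have := List.length_eraseIdx_add_one h4
        rw [hω0, List.length_append, List.length_drop]
        omega
      obtain ⟨ζ, hsubζ, hprodζ, hredζ⟩ := ih ω0 hlen0
      exact ⟨ζ, hsubζ.trans hsub0, by rw [hprodζ, hprod0], hredζ⟩

lemma deletion (ω : List B) :
    ∃ ζ : List B, ζ.Sublist ω ∧ π ζ = π ω ∧ cs.IsReduced ζ :=
  deletion_aux cs ω.length ω le_rfl

/-- chains go down to subwords of any reduced word -/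
lemma cle_subword_aux : ∀ (n : ℕ) (ω : List B), cs.IsReduced ω → ω.length ≤ n →
    ∀ x, cle cs x (π ω) → ∃ ω' : List B, ω'.Sublist ω ∧ π ω' = x := by
  intro n
  induction n with
  | zero =>
    intro ω hred hlen x hx
    rcases Relation.ReflTransGen.cases_tail hx with rfl | ⟨z, hxz, t, ht, hzw, hlt⟩
    · exact ⟨ω, List.Sublist.refl _, rfl⟩
    · exfalso
      have : ℓ (π ω) ≤ ω.length := cs.length_wordProd_le ω
      omega
  | succ n ih =>
    intro ω hred hlen x hx
    rcases Relation.ReflTransGen.cases_tail hx with rfl | ⟨z, hxz, t, ht, hzw, hlt⟩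
    · exact ⟨ω, List.Sublist.refl _, rfl⟩
    · have hz : z = π ω * t := by
        rw [hzw, mul_assoc, ht.mul_self, mul_one]
      have hlt2 : ℓ (π ω * t) < ℓ (π ω) := by rw [← hz]; omega
      obtain ⟨j, hj, hje⟩ := strong_exchange cs ω ht hlt2
      obtain ⟨ζ, hsubζ, hprodζ, hredζ⟩ := deletion cs (ω.eraseIdx j)
      have hzζ : π ζ = z := by rw [hprodζ, hje, ← hz]
      have hlenζ : ζ.length ≤ n := by
        have h1 : ℓ z = ζ.length := by rw [← hzζ]; exact hredζ
        have h2 : ℓ (π ω) = ω.length := hred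
        omega
      obtain ⟨ω', hsub', hprod'⟩ := ih ζ hredζ hlenζ x (by rwa [hzζ])
      exact ⟨ω', (hsub'.trans hsubζ).trans (List.eraseIdx_sublist ω j), hprod'⟩

lemma cle_subword {ω : List B} (hred : cs.IsReduced ω) {x : W} (hx : cle cs x (π ω)) :
    ∃ ω' : List B, ω'.Sublist ω ∧ π ω' = x :=
  cle_subword_aux cs ω.length ω hred le_rfl x hx


lemma length_mul_simple_le (w : W) (i : B) : ℓ (w * s i) ≤ ℓ w + 1 := by
  have := cs.length_mul_le w (s i)
  rw [cs.length_simple] at this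
  exact this

lemma isReduced_length {ω : List B} (h : cs.IsReduced ω) : ℓ (π ω) = ω.length := h

/-- Joint induction: subword implies chain; and the two lifting properties. -/
lemma main_ind : ∀ n : ℕ,
    (∀ ω : List B, cs.IsReduced ω → ω.length = n →
      ∀ ω' : List B, ω'.Sublist ω → cle cs (π ω') (π ω)) ∧
    (∀ (w : W) (i : B), ℓ (w * s i) = n → ℓ w < ℓ (w * s i) →
      ∀ x, cle cs x w → cle cs (x * s i) (w * s i)) ∧
    (∀ (z : W) (i : B), ℓ z = n → ℓ (z * s i) < ℓ z →
      ∀ x, cle cs x z → cle cs (x * s i) z) := by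
  intro n
  induction n using Nat.strong_induction_on with
  | _ n ih =>
  -- Q first
  have hQ : ∀ (w : W) (i : B), ℓ (w * s i) = n → ℓ w < ℓ (w * s i) →
      ∀ x, cle cs x w → cle cs (x * s i) (w * s i) := by
    intro w i hn hlt x hxw
    have hxne := cs.length_mul_simple_ne x i
    rcases lt_or_gt_of_ne hxne with hxdn | hxup
    · have step1 : clt cs (x * s i) x :=
        ⟨s i, cs.isReflection_simple i, (cs.simple_mul_simple_cancel_right i).symm, hxdn⟩
      have step2 : clt cs w (w * s i) := ⟨s i, cs.isReflection_simple i, rfl, hlt⟩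
      exact ((Relation.ReflTransGen.single step1).trans hxw).trans
        (Relation.ReflTransGen.single step2)
    · rcases Relation.ReflTransGen.cases_tail hxw with rfl | ⟨z, hxz, t, ht, hzw, hlz⟩
      · exact cle_refl cs _
      · have hzne := cs.length_mul_simple_ne z i
        rcases lt_or_gt_of_ne hzne with hzdn | hzup
        · have hzn : ℓ z < n := by omega
          have hR := (ih (ℓ z) hzn).2.2 z i rfl hzdn x hxz
          have step1 : clt cs z w := ⟨t, ht, hzw, hlz⟩
          have step2 : clt cs w (w * s i) := ⟨s i, cs.isReflection_simple i, rfl, hlt⟩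
          exact (hR.trans (Relation.ReflTransGen.single step1)).trans
            (Relation.ReflTransGen.single step2)
        · have hzsn : ℓ (z * s i) < n := by
            have := length_mul_simple_le cs z i
            omega
          have hQ' := (ih (ℓ (z * s i)) hzsn).2.1 z i rfl hzup x hxz
          have hws : w * s i = (z * s i) * (s i * t * s i) := by
            rw [hzw]
            simp only [mul_assoc, cs.simple_mul_simple_cancel_left]
          have step : clt cs (z * s i) (w * s i) := by
            refine ⟨s i * t * s i, ?_, hws, by omega⟩
            have := ht.conj (s i)
            rwa [cs.inv_simple] at this
          exact hQ'.trans (Relation.ReflTransGen.single step)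
  -- SC
  have hSC : ∀ ω : List B, cs.IsReduced ω → ω.length = n →
      ∀ ω' : List B, ω'.Sublist ω → cle cs (π ω') (π ω) := by
    intro ω hred hlen ω' hsub
    rcases List.eq_nil_or_concat ω with rfl | ⟨ω1, i, rfl⟩
    · have : ω' = [] := List.sublist_nil.mp hsub
      subst this
      exact cle_refl cs _
    · rw [List.concat_eq_append] at hred hsub hlen ⊢
      have hred1 : cs.IsReduced ω1 := by
        have := CoxeterSystem.IsReduced.take hred ω1.length
        rwa [List.take_left] at this
      have hn1 : n = ω1.length + 1 := by rw [← hlen]; simp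
      have hlen1 : ω1.length < n := by omega
      have hprod : π (ω1 ++ [i]) = π ω1 * s i := by
        rw [cs.wordProd_append, cs.wordProd_singleton]
      have hlw : ℓ (π ω1) ≤ ω1.length := cs.length_wordProd_le ω1
      have hlws : ℓ (π (ω1 ++ [i])) = n := (isReduced_length cs hred).trans hlen
      have hlt : ℓ (π ω1) < ℓ (π ω1 * s i) := by
        rw [← hprod, hlws]
        omega
      rcases sublist_concat_cases hsub with hsub1 | ⟨ξ, hξ, rfl⟩
      · have h1 : cle cs (π ω') (π ω1) := (ih ω1.length hlen1).1 ω1 hred1 rfl ω' hsub1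
        have step : clt cs (π ω1) (π (ω1 ++ [i])) := by
          refine ⟨s i, cs.isReflection_simple i, by rw [hprod], ?_⟩
          rw [hlws]
          omega
        exact h1.trans (Relation.ReflTransGen.single step)
      · have h1 : cle cs (π ξ) (π ω1) := (ih ω1.length hlen1).1 ω1 hred1 rfl ξ hξ
        have h2 := hQ (π ω1) i (by rw [← hprod]; exact hlws) hlt (π ξ) h1
        rw [← cs.wordProd_singleton, ← cs.wordProd_append, ← cs.wordProd_append] at h2
        exact h2
  refine ⟨hSC, hQ, ?_⟩
  -- R
  intro z i hn hlt x hxz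
  obtain ⟨ζ', red', hz'⟩ := cs.exists_reduced_word' (z * s i)
  have hzlen : ℓ (z * s i) + 1 = ℓ z := by
    rcases cs.length_mul_simple z i with hup | hdn
    · omega
    · omega
  have hζlen : ζ'.length = ℓ (z * s i) := by
    rw [← isReduced_length cs red', ← hz']
  have hzprod : π (ζ' ++ [i]) = z := by
    rw [cs.wordProd_append, cs.wordProd_singleton, ← hz',
      cs.simple_mul_simple_cancel_right]
  have hzred : cs.IsReduced (ζ' ++ [i]) := by
    unfold CoxeterSystem.IsReduced
    rw [hzprod, List.length_append, List.length_singleton, hζlen]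
    omega
  have hzlen' : (ζ' ++ [i]).length = n := by
    rw [List.length_append, List.length_singleton, hζlen]
    omega
  obtain ⟨ω', hsub', hprod'⟩ := cle_subword cs hzred (by rwa [hzprod])
  rcases sublist_concat_cases hsub' with hsub1 | ⟨ξ, hξ, rfl⟩
  · have h1 : (ω' ++ [i]).Sublist (ζ' ++ [i]) :=
      List.Sublist.append hsub1 (List.Sublist.refl _)
    have h2 := hSC (ζ' ++ [i]) hzred hzlen' (ω' ++ [i]) h1
    rw [hzprod, cs.wordProd_append, cs.wordProd_singleton, hprod'] at h2
    exact h2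
  · have hxξ : x = π ξ * s i := by
      rw [← hprod', cs.wordProd_append, cs.wordProd_singleton]
    have hxs : x * s i = π ξ := by
      rw [hxξ, cs.simple_mul_simple_cancel_right]
    have h2 := hSC (ζ' ++ [i]) hzred hzlen' ξ (hξ.trans (List.sublist_append_left _ _))
    rw [hzprod] at h2
    rwa [hxs]


lemma sublist_cle {ω ω' : List B} (hred : cs.IsReduced ω) (h : ω'.Sublist ω) :
    cle cs (π ω') (π ω) :=
  (main_ind cs ω.length).1 ω hred rfl ω' h

lemma cle_mul_simple {w x : W} {i : B} (hlt : ℓ w < ℓ (w * s i)) (h : cle cs x w) :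
    cle cs (x * s i) (w * s i) :=
  (main_ind cs (ℓ (w * s i))).2.1 w i rfl hlt x h

lemma cle_mul_simple_down {z x : W} {i : B} (hlt : ℓ (z * s i) < ℓ z) (h : cle cs x z) :
    cle cs (x * s i) z :=
  (main_ind cs (ℓ z)).2.2 z i rfl hlt x h

lemma cle_one_iff (b : W) : cle cs b 1 ↔ b = 1 := by
  constructor
  · intro h
    have h1 := cle_length_le cs h
    have h2 : ℓ (1 : W) = 0 := cs.length_one
    exact cle_eq_of_length_ge cs h (by omega)
  · rintro rfl; exact cle_refl cs 1

/-- The key splitting: Bruhat interval below `w * s i` when length goes up. -/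
lemma cle_concat_iff {w : W} {i : B} (hlt : ℓ w < ℓ (w * s i)) (b : W) :
    cle cs b (w * s i) ↔ (cle cs b w ∨ ∃ c, cle cs c w ∧ b = c * s i) := by
  constructor
  · intro h
    obtain ⟨ζ, hred, hw⟩ := cs.exists_reduced_word' w
    have hζlen : ζ.length = ℓ w := by rw [← isReduced_length cs hred, ← hw]
    have hws : ℓ (w * s i) = ℓ w + 1 := by
      rcases cs.length_mul_simple w i with hup | hdn
      · omega
      · omega
    have hprod : π (ζ ++ [i]) = w * s i := by
      rw [cs.wordProd_append, cs.wordProd_singleton, ← hw]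
    have hred' : cs.IsReduced (ζ ++ [i]) := by
      unfold CoxeterSystem.IsReduced
      rw [hprod, List.length_append, List.length_singleton, hζlen, hws]
    obtain ⟨ω', hsub, hp⟩ := cle_subword cs hred' (by rwa [hprod])
    rcases sublist_concat_cases hsub with hsub1 | ⟨ξ, hξ, rfl⟩
    · left
      have := sublist_cle cs hred hsub1
      rwa [hp, ← hw] at this
    · right
      refine ⟨π ξ, ?_, ?_⟩
      · have := sublist_cle cs hred hξ
        rwa [← hw] at this
      · rw [← hp, cs.wordProd_append, cs.wordProd_singleton]
  · rintro (hbw | ⟨c, hc, rfl⟩)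
    · exact hbw.trans (Relation.ReflTransGen.single ⟨s i, cs.isReflection_simple i, rfl, hlt⟩)
    · exact cle_mul_simple cs hlt hc

lemma bruhatLE_iff_cle (x w : W) : cs.BruhatLE x w ↔ cle cs x w := by
  constructor
  · rintro ⟨ω, hred, rfl, ω', hsub, rfl⟩
    exact sublist_cle cs hred hsub
  · intro h
    obtain ⟨ω, hred, hw⟩ := cs.exists_reduced_word' w
    obtain ⟨ω', hsub, hprod⟩ := cle_subword cs hred (by rwa [← hw])
    exact ⟨ω, hred, hw.symm, ω', hsub, hprod⟩


/-! ### The Demazure product -/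

/-- Demazure product of `u` with a word. -/
noncomputable def dprod (u : W) (ω : List B) : W :=
  ω.foldl (fun x i => if ℓ (x * s i) ≤ ℓ x then x else x * s i) u

@[simp] lemma dprod_nil (u : W) : dprod cs u [] = u := rfl

lemma dprod_concat (u : W) (ω : List B) (i : B) :
    dprod cs u (ω ++ [i]) =
      if ℓ (dprod cs u ω * s i) ≤ ℓ (dprod cs u ω) then dprod cs u ω
      else dprod cs u ω * s i := by
  unfold dprod
  rw [List.foldl_append, List.foldl_cons, List.foldl_nil]

lemma dprod_spec (u : W) (ω : List B) :
    ∃ σ : List B, σ.Sublist ω ∧ dprod cs u ω = u * π σ ∧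
      ℓ (u * π σ) = ℓ u + σ.length := by
  induction ω using List.reverseRecOn with
  | nil => exact ⟨[], List.Sublist.refl _, by simp, by simp⟩
  | append_singleton ω i ih =>
    obtain ⟨σ, hsub, hd, hl⟩ := ih
    rw [dprod_concat]
    by_cases hc : ℓ (dprod cs u ω * s i) ≤ ℓ (dprod cs u ω)
    · rw [if_pos hc]
      exact ⟨σ, hsub.trans (List.sublist_append_left _ _), hd, hl⟩
    · rw [if_neg hc]
      push_neg at hc
      refine ⟨σ ++ [i], List.Sublist.append hsub (List.Sublist.refl _), ?_, ?_⟩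
      · rw [hd, cs.wordProd_append, cs.wordProd_singleton, mul_assoc]
      · have h1 : ℓ (dprod cs u ω * s i) = ℓ (dprod cs u ω) + 1 := by
          rcases cs.length_mul_simple (dprod cs u ω) i with hup | hdn
          · omega
          · omega
        rw [cs.wordProd_append, cs.wordProd_singleton, ← mul_assoc, ← hd, h1, hd, hl]
        simp
        omega

lemma dprod_main (u : W) : ∀ ω : List B, cs.IsReduced ω → ∀ x : W,
    ((∃ a b : W, cle cs a u ∧ cle cs b (π ω) ∧ x = a * b) ↔ cle cs x (dprod cs u ω)) := by
  intro ω
  induction ω using List.reverseRecOn with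
  | nil =>
    intro _ x
    rw [dprod_nil, cs.wordProd_nil]
    constructor
    · rintro ⟨a, b, ha, hb, rfl⟩
      rw [cle_one_iff cs b] at hb
      rw [hb, mul_one]
      exact ha
    · intro h
      exact ⟨x, 1, h, cle_refl cs 1, (mul_one x).symm⟩
  | append_singleton ω i ih =>
    intro hred x
    have hred1 : cs.IsReduced ω := by
      have := CoxeterSystem.IsReduced.take hred ω.length
      rwa [List.take_left] at this
    have hprod : π (ω ++ [i]) = π ω * s i := by
      rw [cs.wordProd_append, cs.wordProd_singleton]
    have hlws : ℓ (π (ω ++ [i])) = ω.length + 1 := by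
      rw [isReduced_length cs hred]
      simp
    have hlt : ℓ (π ω) < ℓ (π ω * s i) := by
      have := cs.length_wordProd_le ω
      rw [← hprod, hlws]
      omega
    have hdne := cs.length_mul_simple_ne (dprod cs u ω) i
    rw [dprod_concat]
    constructor
    · rintro ⟨a, b, ha, hb, rfl⟩
      rw [hprod] at hb
      rcases (cle_concat_iff cs hlt b).mp hb with hbw | ⟨c, hc, rfl⟩
      · have h1 : cle cs (a * b) (dprod cs u ω) := (ih hred1 _).mp ⟨a, b, ha, hbw, rfl⟩
        by_cases hcase : ℓ ((dprod cs u ω) * s i) ≤ ℓ (dprod cs u ω)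
        · rw [if_pos hcase]; exact h1
        · rw [if_neg hcase]
          push_neg at hcase
          exact h1.trans
            (Relation.ReflTransGen.single ⟨s i, cs.isReflection_simple i, rfl, hcase⟩)
      · have h1 : cle cs (a * c) (dprod cs u ω) := (ih hred1 _).mp ⟨a, c, ha, hc, rfl⟩
        rw [← mul_assoc]
        by_cases hcase : ℓ ((dprod cs u ω) * s i) ≤ ℓ (dprod cs u ω)
        · rw [if_pos hcase]
          exact cle_mul_simple_down cs (by omega) h1
        · rw [if_neg hcase]
          push_neg at hcase
          exact cle_mul_simple cs hcase h1
    · intro hx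
      by_cases hcase : ℓ ((dprod cs u ω) * s i) ≤ ℓ (dprod cs u ω)
      · rw [if_pos hcase] at hx
        obtain ⟨a, b, ha, hb, rfl⟩ := (ih hred1 _).mpr hx
        refine ⟨a, b, ha, ?_, rfl⟩
        rw [hprod]
        exact hb.trans
          (Relation.ReflTransGen.single ⟨s i, cs.isReflection_simple i, rfl, hlt⟩)
      · rw [if_neg hcase] at hx
        push_neg at hcase
        rcases (cle_concat_iff cs hcase x).mp hx with hxd | ⟨y, hy, rfl⟩
        · obtain ⟨a, b, ha, hb, rfl⟩ := (ih hred1 _).mpr hxd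
          refine ⟨a, b, ha, ?_, rfl⟩
          rw [hprod]
          exact hb.trans
            (Relation.ReflTransGen.single ⟨s i, cs.isReflection_simple i, rfl, hlt⟩)
        · obtain ⟨a, c, ha, hc, rfl⟩ := (ih hred1 _).mpr hy
          refine ⟨a, c * s i, ha, ?_, by rw [mul_assoc]⟩
          rw [hprod]
          exact cle_mul_simple cs hlt hc

end DemazureAux

/-- In a Coxeter group `W` with Bruhat order `≤` and length `ℓ`, for every pair
`u, v` there is a unique element `w = u*v` (the Demazure product) with
`{u'v' : u' ≤ u, v' ≤ v} = {x : x ≤ w}`.  Moreover `u*v = uv'` for some `v' ≤ v` with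
`ℓ(uv') = ℓ(u) + ℓ(v')`; in particular `ℓ(u*v) ≤ ℓ(u) + ℓ(v)`, and `u*v = uv` iff
`ℓ(uv) = ℓ(u) + ℓ(v)`. -/
theorem demazure_product_existsUnique (cs : CoxeterSystem M W) (u v : W) :
    (∃! d : W, cs.IsDemazureProd u v d) ∧
    ∀ d : W, cs.IsDemazureProd u v d →
      (∃ v' : W, cs.BruhatLE v' v ∧ d = u * v' ∧
        cs.length (u * v') = cs.length u + cs.length v') ∧
      cs.length d ≤ cs.length u + cs.length v ∧
      (d = u * v ↔ cs.length (u * v) = cs.length u + cs.length v) := by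
  classical
  obtain ⟨ρ, hρred, hv⟩ := cs.exists_reduced_word' v
  set d0 := DemazureAux.dprod cs u ρ with hd0
  have hmain : ∀ x, (∃ a b : W, cs.BruhatLE a u ∧ cs.BruhatLE b v ∧ x = a * b) ↔
      cs.BruhatLE x d0 := by
    intro x
    simp only [DemazureAux.bruhatLE_iff_cle]
    rw [hv]
    exact DemazureAux.dprod_main cs u ρ hρred x
  have hIs : cs.IsDemazureProd u v d0 := Set.ext fun x => hmain x
  have hrefl : ∀ w : W, cs.BruhatLE w w := fun w =>
    (DemazureAux.bruhatLE_iff_cle cs w w).mpr (DemazureAux.cle_refl cs w)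
  have huniq : ∀ d : W, cs.IsDemazureProd u v d → d = d0 := by
    intro d hd
    have hsets : {x : W | cs.BruhatLE x d} = {x : W | cs.BruhatLE x d0} :=
      hd.symm.trans hIs
    have e : ∀ x, cs.BruhatLE x d ↔ cs.BruhatLE x d0 := fun x => Set.ext_iff.mp hsets x
    have hdd0 : DemazureAux.cle cs d d0 :=
      (DemazureAux.bruhatLE_iff_cle cs d d0).mp ((e d).mp (hrefl d))
    have hd0d : DemazureAux.cle cs d0 d :=
      (DemazureAux.bruhatLE_iff_cle cs d0 d).mp ((e d0).mpr (hrefl d0))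
    exact DemazureAux.cle_eq_of_length_ge cs hdd0 (DemazureAux.cle_length_le cs hd0d)
  obtain ⟨σ, hσsub, hσd, hσlen⟩ := DemazureAux.dprod_spec cs u ρ
  have hρlen : ρ.length = cs.length v := by
    rw [← DemazureAux.isReduced_length cs hρred, ← hv]
  have hπσ : cs.length (cs.wordProd σ) ≤ σ.length := cs.length_wordProd_le σ
  have hπσ2 : σ.length ≤ cs.length (cs.wordProd σ) := by
    have h1 := cs.length_mul_le u (cs.wordProd σ)
    omega
  have hπσeq : cs.length (cs.wordProd σ) = σ.length := le_antisymm hπσ hπσ2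
  have hσle : σ.length ≤ ρ.length := hσsub.length_le
  refine ⟨⟨d0, hIs, huniq⟩, ?_⟩
  intro d hd
  have hdeq := huniq d hd
  subst hdeq
  refine ⟨⟨cs.wordProd σ, ⟨ρ, hρred, hv.symm, σ, hσsub, rfl⟩, hσd, ?_⟩, ?_, ?_, ?_⟩
  · rw [hσlen, hπσeq]
  · rw [hd0, hσd, hσlen]
    omega
  · intro h
    have hπσv : cs.wordProd σ = v := by
      have : u * cs.wordProd σ = u * v := by rw [← hσd, ← h]
      exact mul_left_cancel this
    have h2 : cs.length (u * v) ≤ cs.length u + cs.length v := cs.length_mul_le u v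
    rw [hπσv] at hσlen hπσeq
    omega
  · intro h
    have huvle : cs.BruhatLE (u * v) d0 := (hmain (u * v)).mp ⟨u, v, hrefl u, hrefl v, rfl⟩
    have hcle : DemazureAux.cle cs (u * v) d0 :=
      (DemazureAux.bruhatLE_iff_cle cs (u * v) d0).mp huvle
    have hlen1 : cs.length (u * v) ≤ cs.length d0 := DemazureAux.cle_length_le cs hcle
    have hlen2 : cs.length d0 ≤ cs.length (u * v) := by
      rw [hd0, hσd, hσlen]
      omega
    exact (DemazureAux.cle_eq_of_length_ge cs hcle hlen2).symm
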